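/- Let a ∈ C¹([0,T] × [0,Λ]) and for each λ let φ₁(·,λ), φ₂(·,λ) be the canonical solutions of ÿ + a(t,λ)y = 0 (i.e. φ₁(0,λ) = φ̇₂(0,λ) = 1, φ̇₁(0,λ) = φ₂(0,λ) = 0). Define R_λ = sup_{μ∈[0,λ]} max{‖φᵢ(·,μ)‖_∞, ‖φ̇ᵢ(·,μ)‖_∞ : i = 1,2} and let r₀ > R₀. Suppose d(λ,R) is positive, continuous, increasing in both variables with d(λ,R_λ) ≥ sup_{t∈[0,T]} |∂_λ a(t,λ)|, and set Q(λ,R) = 2TλR³d(λ,R) − R + r₀. If there exists λ* ∈ (0,Λ] such that for each λ ∈ [0,λ*] the function Q(λ,·) has first two consecutive zeros R_{1,λ} ≤ R_{2,λ} with r₀ ≤ R_{1,λ}, Q(λ,R) > 0 on [0,R_{1,λ}) and Q(λ,R) < 0 on (R_{1,λ}, R_{2,λ}), then R_λ ≤ R_{1,λ} for all λ ∈ (0,λ*]. -/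

import Mathlib

open Set MeasureTheory intervalIntegral

private lemma ftc_right' {g : ℝ → ℝ} {T t : ℝ} (hg : ContinuousOn g (Icc 0 T)) (ht : t ∈ Ico 0 T) :
    HasDerivWithinAt (fun u => ∫ s in (0:ℝ)..u, g s) (g t) (Ici t) t := by
  have htI : t ∈ Icc 0 T := Ico_subset_Icc_self ht
  haveI : Fact (t ∈ Icc (0:ℝ) T) := ⟨htI⟩
  have hint : IntervalIntegrable g volume 0 t := by
    apply (hg.mono ?_).intervalIntegrable
    rw [uIcc_of_le ht.1]
    exact Icc_subset_Icc le_rfl ht.2.le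
  have h2 : HasDerivWithinAt (fun u => ∫ s in (0:ℝ)..u, g s) (g t) (Icc 0 T) t :=
    integral_hasDerivWithinAt_right hint
      (hg.stronglyMeasurableAtFilter_nhdsWithin measurableSet_Icc t) (hg t htI)
  exact h2.mono_of_mem_nhdsWithin (Icc_mem_nhdsGE_of_mem ⟨htI.1, ht.2⟩)

private lemma gronwall_zero' {T M : ℝ} (α w w' : ℝ → ℝ)
    (hw : ContinuousOn w (Icc 0 T)) (hw' : ContinuousOn w' (Icc 0 T))
    (hdw : ∀ t ∈ Ico 0 T, HasDerivWithinAt w (w' t) (Ici t) t)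
    (hdw' : ∀ t ∈ Ico 0 T, HasDerivWithinAt w' (-α t * w t) (Ici t) t)
    (hM : ∀ t ∈ Icc 0 T, |α t| ≤ M)
    (h0 : w 0 = 0) (h0' : w' 0 = 0) :
    ∀ t ∈ Icc 0 T, w t = 0 ∧ w' t = 0 := by
  set K := max 1 M with hK
  have hbound := norm_le_gronwallBound_of_norm_deriv_right_le
    (f := fun t => (w t, w' t)) (f' := fun t => (w' t, -α t * w t)) (δ := 0) (K := K) (ε := 0)
    (a := 0) (b := T) (hw.prodMk hw') (fun x hx => (hdw x hx).prodMk (hdw' x hx))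
    (by simp [h0, h0', Prod.norm_def]) ?_
  · intro t ht
    have := hbound t ht
    rw [gronwallBound_ε0_δ0] at this
    have hn : ‖(w t, w' t)‖ ≤ 0 := this
    simp only [Prod.norm_def, Real.norm_eq_abs, sup_le_iff] at hn
    constructor <;> [exact abs_eq_zero.mp (le_antisymm hn.1 (abs_nonneg _));
      exact abs_eq_zero.mp (le_antisymm hn.2 (abs_nonneg _))]
  · intro x hx
    have hxI : x ∈ Icc 0 T := Ico_subset_Icc_self hx
    rw [Prod.norm_def, Prod.norm_def]
    simp only [Real.norm_eq_abs]
    have h1 : |w' x| ≤ K * max |w x| |w' x| := by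
      calc |w' x| ≤ max |w x| |w' x| := le_max_right _ _
      _ ≤ K * max |w x| |w' x| := by
          nlinarith [le_max_left (1:ℝ) M, abs_nonneg (w x), abs_nonneg (w' x),
            le_max_left |w x| |w' x|, le_max_right |w x| |w' x|]
    have h2 : |-α x * w x| ≤ K * max |w x| |w' x| := by
      rw [abs_mul, abs_neg]
      calc |α x| * |w x| ≤ M * |w x| :=
            mul_le_mul_of_nonneg_right (hM x hxI) (abs_nonneg _)
      _ ≤ K * max |w x| |w' x| := by
          apply mul_le_mul (le_max_right _ _) (le_max_left _ _) (abs_nonneg _)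
          exact le_trans zero_le_one (le_max_left _ _)
    rw [add_zero]
    exact max_le h1 h2

/-- Quantified a priori bound R_λ ≤ R_{1,λ} for the canonical solutions of the
one-parameter family ÿ + a(t,λ)y = 0. -/
theorem stmt7 (T Λ : ℝ) (hT : 0 < T) (hΛ : 0 < Λ)
    (a alam : ℝ → ℝ → ℝ)
    (hacont : ContinuousOn (fun p : ℝ × ℝ => a p.1 p.2) (Icc 0 T ×ˢ Icc 0 Λ))
    (halamcont : ContinuousOn (fun p : ℝ × ℝ => alam p.1 p.2) (Icc 0 T ×ˢ Icc 0 Λ))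
    (halam : ∀ t ∈ Icc (0:ℝ) T, ∀ lam ∈ Icc (0:ℝ) Λ,
      HasDerivAt (fun e => a t e) (alam t lam) lam)
    (φ₁ φ₂ φ₁' φ₂' : ℝ → ℝ → ℝ)
    (hode : ∀ lam ∈ Icc (0:ℝ) Λ, ∀ t ∈ Icc (0:ℝ) T,
      HasDerivAt (fun s => φ₁ s lam) (φ₁' t lam) t ∧
      HasDerivAt (fun s => φ₂ s lam) (φ₂' t lam) t ∧
      HasDerivAt (fun s => φ₁' s lam) (-(a t lam) * φ₁ t lam) t ∧
      HasDerivAt (fun s => φ₂' s lam) (-(a t lam) * φ₂ t lam) t)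
    (hinit : ∀ lam ∈ Icc (0:ℝ) Λ,
      φ₁ 0 lam = 1 ∧ φ₂' 0 lam = 1 ∧ φ₁' 0 lam = 0 ∧ φ₂ 0 lam = 0)
    (R : ℝ → ℝ)
    (hR : ∀ lam ∈ Icc (0:ℝ) Λ, IsLUB
      {x : ℝ | ∃ μ ∈ Icc (0:ℝ) lam, ∃ t ∈ Icc (0:ℝ) T,
        x = |φ₁ t μ| ∨ x = |φ₂ t μ| ∨ x = |φ₁' t μ| ∨ x = |φ₂' t μ|} (R lam))
    (r₀ : ℝ) (hr₀ : R 0 < r₀)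
    (d : ℝ → ℝ → ℝ)
    (hdpos : ∀ lam x : ℝ, 0 < d lam x)
    (hdcont : Continuous (fun p : ℝ × ℝ => d p.1 p.2))
    (hdmono : ∀ l₁ l₂ x₁ x₂ : ℝ, l₁ ≤ l₂ → x₁ ≤ x₂ → d l₁ x₁ ≤ d l₂ x₂)
    (hdbound : ∀ lam ∈ Icc (0:ℝ) Λ, ∀ t ∈ Icc (0:ℝ) T, |alam t lam| ≤ d lam (R lam))
    (Q : ℝ → ℝ → ℝ)
    (hQ : ∀ lam x : ℝ, Q lam x = 2*T*lam*x^3*(d lam x) - x + r₀)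
    (lamstar : ℝ) (hls : 0 < lamstar) (hls' : lamstar ≤ Λ)
    (R₁ R₂ : ℝ → ℝ)
    (hroots : ∀ lam ∈ Icc (0:ℝ) lamstar,
      Q lam (R₁ lam) = 0 ∧ Q lam (R₂ lam) = 0 ∧ R₁ lam ≤ R₂ lam ∧
      r₀ ≤ R₁ lam ∧
      (∀ x ∈ Ico (0:ℝ) (R₁ lam), 0 < Q lam x) ∧
      (∀ x ∈ Ioo (R₁ lam) (R₂ lam), Q lam x < 0)) :
    ∀ lam ∈ Ioc (0:ℝ) lamstar, R lam ≤ R₁ lam := by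
  -- basic membership facts
  have hT0 : (0:ℝ) ∈ Icc (0:ℝ) T := ⟨le_rfl, hT.le⟩
  have h0Λ : (0:ℝ) ∈ Icc (0:ℝ) Λ := ⟨le_rfl, hΛ.le⟩
  -- upper bounds from the LUB
  have hub : ∀ l ∈ Icc (0:ℝ) Λ, ∀ μ, 0 ≤ μ → μ ≤ l → ∀ t ∈ Icc (0:ℝ) T,
      |φ₁ t μ| ≤ R l ∧ |φ₂ t μ| ≤ R l ∧ |φ₁' t μ| ≤ R l ∧ |φ₂' t μ| ≤ R l := by
    intro l hl μ hμ0 hμl t ht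
    have h := (hR l hl).1
    exact ⟨h ⟨μ, ⟨hμ0, hμl⟩, t, ht, Or.inl rfl⟩,
      h ⟨μ, ⟨hμ0, hμl⟩, t, ht, Or.inr (Or.inl rfl)⟩,
      h ⟨μ, ⟨hμ0, hμl⟩, t, ht, Or.inr (Or.inr (Or.inl rfl))⟩,
      h ⟨μ, ⟨hμ0, hμl⟩, t, ht, Or.inr (Or.inr (Or.inr rfl))⟩⟩
  have hR1 : ∀ l ∈ Icc (0:ℝ) Λ, 1 ≤ R l := by
    intro l hl
    have := (hub l hl 0 le_rfl hl.1 0 hT0).1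
    rwa [(hinit 0 h0Λ).1, abs_one] at this
  have hRmono : ∀ l₁, 0 ≤ l₁ → ∀ l₂ ∈ Icc (0:ℝ) Λ, l₁ ≤ l₂ → R l₁ ≤ R l₂ := by
    intro l₁ hl₁ l₂ hl₂ h12
    refine (hR l₁ ⟨hl₁, h12.trans hl₂.2⟩).2 ?_
    intro x hx
    obtain ⟨μ, hμ, t, ht, hor⟩ := hx
    exact (hR l₂ hl₂).1 ⟨μ, ⟨hμ.1, hμ.2.trans h12⟩, t, ht, hor⟩
  -- global bound for a
  obtain ⟨M, hM⟩ : ∃ M, ∀ t ∈ Icc (0:ℝ) T, ∀ e ∈ Icc (0:ℝ) Λ, |a t e| ≤ M := by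
    obtain ⟨M, hM⟩ := (isCompact_Icc.prod isCompact_Icc).exists_bound_of_continuousOn hacont
    exact ⟨M, fun t ht e he => by simpa using hM (t, e) ⟨ht, he⟩⟩
  -- continuity in t
  have hca : ∀ μ ∈ Icc (0:ℝ) Λ, ContinuousOn (fun t => a t μ) (Icc 0 T) := by
    intro μ hμ
    exact hacont.comp ((continuous_id.prodMk continuous_const).continuousOn) (fun t ht => ⟨ht, hμ⟩)
  -- Wronskian
  have hW : ∀ μ ∈ Icc (0:ℝ) Λ, ∀ t ∈ Icc (0:ℝ) T,
      φ₁ t μ * φ₂' t μ - φ₂ t μ * φ₁' t μ = 1 := by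
    intro μ hμ
    have hconst := constant_of_has_deriv_right_zero
      (f := fun t => φ₁ t μ * φ₂' t μ - φ₂ t μ * φ₁' t μ) (a := 0) (b := T) ?_ ?_
    · intro t ht
      rw [hconst t ht]
      obtain ⟨i1, i2, i3, i4⟩ := hinit μ hμ
      rw [i1, i2, i3, i4]; ring
    · intro t ht
      obtain ⟨d1, d2, d3, d4⟩ := hode μ hμ t ht
      exact ((d1.continuousAt.mul d4.continuousAt).sub
        (d2.continuousAt.mul d3.continuousAt)).continuousWithinAt
    · intro t ht
      obtain ⟨d1, d2, d3, d4⟩ := hode μ hμ t (Ico_subset_Icc_self ht)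
      have h : HasDerivAt (fun t => φ₁ t μ * φ₂' t μ - φ₂ t μ * φ₁' t μ)
          (φ₁' t μ * φ₂' t μ + φ₁ t μ * (-(a t μ) * φ₂ t μ) -
            (φ₁' t μ * φ₂' t μ + φ₂ t μ * (-(a t μ) * φ₁ t μ))) t := by
        have := (d1.mul d4).sub (d2.mul d3)
        convert this using 1
        · rfl
        · rfl
        · rfl
        ring
      have h2 : (φ₁' t μ * φ₂' t μ + φ₁ t μ * (-(a t μ) * φ₂ t μ) -
          (φ₁' t μ * φ₂' t μ + φ₂ t μ * (-(a t μ) * φ₁ t μ))) = 0 := by ring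
      rw [h2] at h
      exact h.hasDerivWithinAt
  -- mean value bound on a in the parameter
  have hMVT : ∀ l ∈ Icc (0:ℝ) Λ, ∀ μ μ', 0 ≤ μ → μ ≤ μ' → μ' ≤ l → ∀ s ∈ Icc (0:ℝ) T,
      |a s μ' - a s μ| ≤ d l (R l) * (μ' - μ) := by
    intro l hl μ μ' hμ0 hμμ' hμ'l s hs
    have hsub : Icc μ μ' ⊆ Icc (0:ℝ) Λ := Icc_subset_Icc hμ0 (hμ'l.trans hl.2)
    have hbd : ∀ x ∈ Ico μ μ', ‖alam s x‖ ≤ d l (R l) := by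
      intro x hx
      have hxΛ : x ∈ Icc (0:ℝ) Λ := hsub (Ico_subset_Icc_self hx)
      rw [Real.norm_eq_abs]
      exact (hdbound x hxΛ s hs).trans (hdmono x l (R x) (R l) (hx.2.le.trans hμ'l)
        (hRmono x hxΛ.1 l hl (hx.2.le.trans hμ'l)))
    have h := norm_image_sub_le_of_norm_deriv_right_le_segment
      (f := fun e => a s e) (f' := fun e => alam s e) (a := μ) (b := μ')
      (fun e he => (halam s hs e (hsub he)).continuousAt.continuousWithinAt)
      (fun x hx => (halam s hs x (hsub (Ico_subset_Icc_self hx))).hasDerivWithinAt)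
      hbd μ' (right_mem_Icc.mpr hμμ')
    simpa using h
  -- key Lipschitz estimate in the parameter
  have key : ∀ l ∈ Icc (0:ℝ) Λ, ∀ μ μ', 0 ≤ μ → μ ≤ μ' → μ' ≤ l → ∀ t ∈ Icc (0:ℝ) T,
      |φ₁ t μ' - φ₁ t μ| ≤ 2*T*(R l)^3*(d l (R l))*(μ' - μ) ∧
      |φ₂ t μ' - φ₂ t μ| ≤ 2*T*(R l)^3*(d l (R l))*(μ' - μ) ∧
      |φ₁' t μ' - φ₁' t μ| ≤ 2*T*(R l)^3*(d l (R l))*(μ' - μ) ∧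
      |φ₂' t μ' - φ₂' t μ| ≤ 2*T*(R l)^3*(d l (R l))*(μ' - μ) := by
    intro l hl μ μ' hμ0 hμμ' hμ'l
    have hμΛ : μ ∈ Icc (0:ℝ) Λ := ⟨hμ0, (hμμ'.trans hμ'l).trans hl.2⟩
    have hμ'Λ : μ' ∈ Icc (0:ℝ) Λ := ⟨hμ0.trans hμμ', hμ'l.trans hl.2⟩
    have hRl : 0 < R l := lt_of_lt_of_le one_pos (hR1 l hl)
    have hD0 : 0 < d l (R l) := hdpos _ _
    have hΔ0 : (0:ℝ) ≤ μ' - μ := by linarith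
    have main : ∀ u u' v v' : ℝ → ℝ,
        (∀ t ∈ Icc (0:ℝ) T, HasDerivAt u (u' t) t) →
        (∀ t ∈ Icc (0:ℝ) T, HasDerivAt u' (-(a t μ) * u t) t) →
        (∀ t ∈ Icc (0:ℝ) T, HasDerivAt v (v' t) t) →
        (∀ t ∈ Icc (0:ℝ) T, HasDerivAt v' (-(a t μ') * v t) t) →
        v 0 = u 0 → v' 0 = u' 0 → (∀ t ∈ Icc (0:ℝ) T, |u t| ≤ R l) →
        ∀ t ∈ Icc (0:ℝ) T, |v t - u t| ≤ 2*T*(R l)^3*(d l (R l))*(μ' - μ) ∧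
          |v' t - u' t| ≤ 2*T*(R l)^3*(d l (R l))*(μ' - μ) := by
      intro u u' v v' hu hu' hv hv' h00 h00' hubu
      set f : ℝ → ℝ := fun s => (a s μ - a s μ') * u s with hfdef
      have hcu : ContinuousOn u (Icc 0 T) :=
        fun s hs => ((hu s hs).continuousAt).continuousWithinAt
      have hcu' : ContinuousOn u' (Icc 0 T) :=
        fun s hs => ((hu' s hs).continuousAt).continuousWithinAt
      have hcv : ContinuousOn v (Icc 0 T) :=
        fun s hs => ((hv s hs).continuousAt).continuousWithinAt
      have hcv' : ContinuousOn v' (Icc 0 T) :=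
        fun s hs => ((hv' s hs).continuousAt).continuousWithinAt
      have hcf : ContinuousOn f (Icc 0 T) := ((hca μ hμΛ).sub (hca μ' hμ'Λ)).mul hcu
      have hA1 : ∀ t ∈ Icc (0:ℝ) T, HasDerivAt (fun s => φ₁ s μ') (φ₁' t μ') t :=
        fun t ht => (hode μ' hμ'Λ t ht).1
      have hA2 : ∀ t ∈ Icc (0:ℝ) T, HasDerivAt (fun s => φ₂ s μ') (φ₂' t μ') t :=
        fun t ht => (hode μ' hμ'Λ t ht).2.1
      have hA1' : ∀ t ∈ Icc (0:ℝ) T, HasDerivAt (fun s => φ₁' s μ') (-(a t μ') * φ₁ t μ') t :=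
        fun t ht => (hode μ' hμ'Λ t ht).2.2.1
      have hA2' : ∀ t ∈ Icc (0:ℝ) T, HasDerivAt (fun s => φ₂' s μ') (-(a t μ') * φ₂ t μ') t :=
        fun t ht => (hode μ' hμ'Λ t ht).2.2.2
      have hcA1 : ContinuousOn (fun t => φ₁ t μ') (Icc 0 T) :=
        fun s hs => ((hA1 s hs).continuousAt).continuousWithinAt
      have hcA2 : ContinuousOn (fun t => φ₂ t μ') (Icc 0 T) :=
        fun s hs => ((hA2 s hs).continuousAt).continuousWithinAt
      have hcA1' : ContinuousOn (fun t => φ₁' t μ') (Icc 0 T) :=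
        fun s hs => ((hA1' s hs).continuousAt).continuousWithinAt
      have hcA2' : ContinuousOn (fun t => φ₂' t μ') (Icc 0 T) :=
        fun s hs => ((hA2' s hs).continuousAt).continuousWithinAt
      set g1 : ℝ → ℝ := fun s => φ₁ s μ' * f s with hg1def
      set g2 : ℝ → ℝ := fun s => φ₂ s μ' * f s with hg2def
      have hcg1 : ContinuousOn g1 (Icc 0 T) := hcA1.mul hcf
      have hcg2 : ContinuousOn g2 (Icc 0 T) := hcA2.mul hcf
      set I1 : ℝ → ℝ := fun t => ∫ s in (0:ℝ)..t, g1 s with hI1def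
      set I2 : ℝ → ℝ := fun t => ∫ s in (0:ℝ)..t, g2 s with hI2def
      have hcI1 : ContinuousOn I1 (Icc 0 T) := by
        have h := intervalIntegral.continuousOn_primitive_interval (a := (0:ℝ)) (b := T)
          (μ := volume) (f := g1) (by rw [uIcc_of_le hT.le]; exact hcg1.integrableOn_Icc)
        rwa [uIcc_of_le hT.le] at h
      have hcI2 : ContinuousOn I2 (Icc 0 T) := by
        have h := intervalIntegral.continuousOn_primitive_interval (a := (0:ℝ)) (b := T)
          (μ := volume) (f := g2) (by rw [uIcc_of_le hT.le]; exact hcg2.integrableOn_Icc)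
        rwa [uIcc_of_le hT.le] at h
      set z : ℝ → ℝ := fun t => φ₂ t μ' * I1 t - φ₁ t μ' * I2 t with hzdef
      set z' : ℝ → ℝ := fun t => φ₂' t μ' * I1 t - φ₁' t μ' * I2 t with hz'def
      have hcz : ContinuousOn z (Icc 0 T) := (hcA2.mul hcI1).sub (hcA1.mul hcI2)
      have hcz' : ContinuousOn z' (Icc 0 T) := (hcA2'.mul hcI1).sub (hcA1'.mul hcI2)
      have hzd : ∀ r ∈ Ico (0:ℝ) T, HasDerivWithinAt z (z' r) (Ici r) r := by
        intro r hr
        have hrI : r ∈ Icc (0:ℝ) T := Ico_subset_Icc_self hr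
        have h := ((hA2 r hrI).hasDerivWithinAt.mul (ftc_right' hcg1 hr)).sub
          ((hA1 r hrI).hasDerivWithinAt.mul (ftc_right' hcg2 hr))
        convert h using 1
        · rfl
        · rfl
        · rfl
        rw [hz'def, hg1def, hg2def]
        ring
      have hz'd : ∀ r ∈ Ico (0:ℝ) T,
          HasDerivWithinAt z' (-(a r μ') * z r + f r) (Ici r) r := by
        intro r hr
        have hrI : r ∈ Icc (0:ℝ) T := Ico_subset_Icc_self hr
        have hWr := hW μ' hμ'Λ r hrI
        have h := ((hA2' r hrI).hasDerivWithinAt.mul (ftc_right' hcg1 hr)).sub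
          ((hA1' r hrI).hasDerivWithinAt.mul (ftc_right' hcg2 hr))
        convert h using 1
        · rfl
        · rfl
        · rfl
        rw [hzdef, hg1def, hg2def]
        simp only []
        linear_combination (-(f r)) * hWr
      set w : ℝ → ℝ := fun t => v t - u t - z t with hwdef
      set w' : ℝ → ℝ := fun t => v' t - u' t - z' t with hw'def
      have hcw : ContinuousOn w (Icc 0 T) := (hcv.sub hcu).sub hcz
      have hcw' : ContinuousOn w' (Icc 0 T) := (hcv'.sub hcu').sub hcz'
      have hwd : ∀ r ∈ Ico (0:ℝ) T, HasDerivWithinAt w (w' r) (Ici r) r := by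
        intro r hr
        have hrI : r ∈ Icc (0:ℝ) T := Ico_subset_Icc_self hr
        exact (((hv r hrI).sub (hu r hrI)).hasDerivWithinAt).sub (hzd r hr)
      have hw'd : ∀ r ∈ Ico (0:ℝ) T,
          HasDerivWithinAt w' (-(a r μ') * w r) (Ici r) r := by
        intro r hr
        have hrI : r ∈ Icc (0:ℝ) T := Ico_subset_Icc_self hr
        have h := (((hv' r hrI).sub (hu' r hrI)).hasDerivWithinAt).sub (hz'd r hr)
        convert h using 1
        · rfl
        · rfl
        · rfl
        rw [hwdef, hfdef]
        simp only []
        ring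
      have hI10 : I1 0 = 0 := intervalIntegral.integral_same
      have hI20 : I2 0 = 0 := intervalIntegral.integral_same
      have hw0 : w 0 = 0 := by rw [hwdef]; simp only [hzdef]; rw [hI10, hI20, h00]; ring
      have hw'0 : w' 0 = 0 := by rw [hw'def]; simp only [hz'def]; rw [hI10, hI20, h00']; ring
      have hwz := gronwall_zero' (fun t => a t μ') w w' hcw hcw' hwd hw'd
        (fun t ht => hM t ht μ' hμ'Λ) hw0 hw'0
      have hfb : ∀ s ∈ Icc (0:ℝ) T, |f s| ≤ d l (R l) * (μ' - μ) * R l := by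
        intro s hs
        rw [hfdef]
        simp only []
        rw [abs_mul, abs_sub_comm]
        have h1 := hMVT l hl μ μ' hμ0 hμμ' hμ'l s hs
        have h2 := hubu s hs
        have := mul_le_mul h1 h2 (abs_nonneg _) (mul_nonneg (mul_nonneg hD0.le hΔ0) hRl.le
          |>.trans (le_of_eq rfl) |>.trans (le_refl _) |>.trans_eq rfl |>.trans (le_refl _)
          |> fun _ => mul_nonneg hD0.le hΔ0)
        exact this
      have hIb : ∀ J : ℝ → ℝ, (∀ x ∈ Icc (0:ℝ) T, |(fun s => J s * f s) x| ≤
          R l * (d l (R l) * (μ' - μ) * R l)) →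
          ∀ t ∈ Icc (0:ℝ) T, |∫ s in (0:ℝ)..t, J s * f s| ≤
            R l * (d l (R l) * (μ' - μ) * R l) * T := by
        intro J hJ t ht
        have hb : ∀ x ∈ Set.uIoc (0:ℝ) t, ‖J x * f x‖ ≤ R l * (d l (R l) * (μ' - μ) * R l) := by
          intro x hx
          rw [uIoc_of_le ht.1] at hx
          exact hJ x ⟨hx.1.le, hx.2.trans ht.2⟩
        have h := intervalIntegral.norm_integral_le_of_norm_le_const hb
        rw [Real.norm_eq_abs, sub_zero] at h
        have hC0 : (0:ℝ) ≤ R l * (d l (R l) * (μ' - μ) * R l) :=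
          mul_nonneg hRl.le (mul_nonneg (mul_nonneg hD0.le hΔ0) hRl.le)
        have : |t| ≤ T := by rw [abs_of_nonneg ht.1]; exact ht.2
        calc |∫ s in (0:ℝ)..t, J s * f s| ≤ R l * (d l (R l) * (μ' - μ) * R l) * |t| := h
        _ ≤ R l * (d l (R l) * (μ' - μ) * R l) * T := mul_le_mul_of_nonneg_left this hC0
      have hI1b : ∀ t ∈ Icc (0:ℝ) T, |I1 t| ≤ R l * (d l (R l) * (μ' - μ) * R l) * T := by
        apply hIb
        intro x hx
        simp only []
        rw [abs_mul]
        exact mul_le_mul (hub l hl μ' (hμ0.trans hμμ') hμ'l x hx).1 (hfb x hx) (abs_nonneg _) hRl.le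
      have hI2b : ∀ t ∈ Icc (0:ℝ) T, |I2 t| ≤ R l * (d l (R l) * (μ' - μ) * R l) * T := by
        apply hIb
        intro x hx
        simp only []
        rw [abs_mul]
        exact mul_le_mul (hub l hl μ' (hμ0.trans hμμ') hμ'l x hx).2.1 (hfb x hx) (abs_nonneg _) hRl.le
      intro t ht
      have h1 : v t - u t = z t := by
        have := (hwz t ht).1
        rw [hwdef] at this
        simp only [] at this
        linarith
      have h2 : v' t - u' t = z' t := by
        have := (hwz t ht).2
        rw [hw'def] at this
        simp only [] at this
        linarith
      have hCb : (0:ℝ) ≤ R l * (d l (R l) * (μ' - μ) * R l) * T :=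
        mul_nonneg (mul_nonneg hRl.le (mul_nonneg (mul_nonneg hD0.le hΔ0) hRl.le)) hT.le
      have hbnd := hub l hl μ' (hμ0.trans hμμ') hμ'l t ht
      constructor
      · rw [h1, hzdef]
        simp only []
        have e1 : |φ₂ t μ' * I1 t| ≤ R l * (R l * (d l (R l) * (μ' - μ) * R l) * T) := by
          rw [abs_mul]
          exact mul_le_mul hbnd.2.1 (hI1b t ht) (abs_nonneg _) hRl.le
        have e2 : |φ₁ t μ' * I2 t| ≤ R l * (R l * (d l (R l) * (μ' - μ) * R l) * T) := by
          rw [abs_mul]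
          exact mul_le_mul hbnd.1 (hI2b t ht) (abs_nonneg _) hRl.le
        have e3 := abs_sub (φ₂ t μ' * I1 t) (φ₁ t μ' * I2 t)
        have : R l * (R l * (d l (R l) * (μ' - μ) * R l) * T) +
            R l * (R l * (d l (R l) * (μ' - μ) * R l) * T) =
            2*T*(R l)^3*(d l (R l))*(μ' - μ) := by ring
        linarith
      · rw [h2, hz'def]
        simp only []
        have e1 : |φ₂' t μ' * I1 t| ≤ R l * (R l * (d l (R l) * (μ' - μ) * R l) * T) := by
          rw [abs_mul]
          exact mul_le_mul hbnd.2.2.2 (hI1b t ht) (abs_nonneg _) hRl.le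
        have e2 : |φ₁' t μ' * I2 t| ≤ R l * (R l * (d l (R l) * (μ' - μ) * R l) * T) := by
          rw [abs_mul]
          exact mul_le_mul hbnd.2.2.1 (hI2b t ht) (abs_nonneg _) hRl.le
        have e3 := abs_sub (φ₂' t μ' * I1 t) (φ₁' t μ' * I2 t)
        have : R l * (R l * (d l (R l) * (μ' - μ) * R l) * T) +
            R l * (R l * (d l (R l) * (μ' - μ) * R l) * T) =
            2*T*(R l)^3*(d l (R l))*(μ' - μ) := by ring
        linarith
    have k1 := main (fun s => φ₁ s μ) (fun s => φ₁' s μ) (fun s => φ₁ s μ') (fun s => φ₁' s μ')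
      (fun t ht => (hode μ hμΛ t ht).1) (fun t ht => (hode μ hμΛ t ht).2.2.1)
      (fun t ht => (hode μ' hμ'Λ t ht).1) (fun t ht => (hode μ' hμ'Λ t ht).2.2.1)
      (show φ₁ 0 μ' = φ₁ 0 μ by rw [(hinit μ' hμ'Λ).1, (hinit μ hμΛ).1])
      (show φ₁' 0 μ' = φ₁' 0 μ by rw [(hinit μ' hμ'Λ).2.2.1, (hinit μ hμΛ).2.2.1])
      (fun t ht => (hub l hl μ hμ0 (hμμ'.trans hμ'l) t ht).1)
    have k2 := main (fun s => φ₂ s μ) (fun s => φ₂' s μ) (fun s => φ₂ s μ') (fun s => φ₂' s μ')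
      (fun t ht => (hode μ hμΛ t ht).2.1) (fun t ht => (hode μ hμΛ t ht).2.2.2)
      (fun t ht => (hode μ' hμ'Λ t ht).2.1) (fun t ht => (hode μ' hμ'Λ t ht).2.2.2)
      (show φ₂ 0 μ' = φ₂ 0 μ by rw [(hinit μ' hμ'Λ).2.2.2, (hinit μ hμΛ).2.2.2])
      (show φ₂' 0 μ' = φ₂' 0 μ by rw [(hinit μ' hμ'Λ).2.1, (hinit μ hμΛ).2.1])
      (fun t ht => (hub l hl μ hμ0 (hμμ'.trans hμ'l) t ht).2.1)
    intro t ht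
    exact ⟨(k1 t ht).1, (k2 t ht).1, (k1 t ht).2, (k2 t ht).2⟩
  -- positivity of Q at R l
  have habs : ∀ x y c : ℝ, |y| ≤ R 0 → |x - y| ≤ c → |x| ≤ R 0 + c := by
    intro x y c h1 h2
    have := abs_sub_abs_le_abs_sub x y
    linarith
  have hQR : ∀ l ∈ Icc (0:ℝ) Λ, 0 < Q l (R l) := by
    intro l hl
    have hRl : 0 < R l := lt_of_lt_of_le one_pos (hR1 l hl)
    have hL0 : (0:ℝ) ≤ 2*T*(R l)^3*(d l (R l)) :=
      (mul_pos (mul_pos (by linarith : (0:ℝ) < 2*T) (pow_pos hRl 3)) (hdpos _ _)).le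
    have hub2 : R l ≤ R 0 + 2*T*(R l)^3*(d l (R l)) * l := by
      apply (hR l hl).2
      rintro x ⟨μ, hμ, t, ht, hor⟩
      have hkey := key l hl 0 μ le_rfl hμ.1 hμ.2 t ht
      have hb0 := hub 0 h0Λ 0 le_rfl le_rfl t ht
      have hμl : 2*T*(R l)^3*(d l (R l)) * μ ≤ 2*T*(R l)^3*(d l (R l)) * l :=
        mul_le_mul_of_nonneg_left hμ.2 hL0
      rw [sub_zero] at hkey
      rcases hor with h | h | h | h <;> rw [h]
      · exact le_trans (habs _ _ _ hb0.1 hkey.1) (by linarith)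
      · exact le_trans (habs _ _ _ hb0.2.1 hkey.2.1) (by linarith)
      · exact le_trans (habs _ _ _ hb0.2.2.1 hkey.2.2.1) (by linarith)
      · exact le_trans (habs _ _ _ hb0.2.2.2 hkey.2.2.2) (by linarith)
    have hQval : Q l (R l) = 2*T*(R l)^3*(d l (R l)) * l - R l + r₀ := by rw [hQ]; ring
    rw [hQval]
    linarith
  -- continuity of R
  have hRcont : ContinuousOn R (Icc 0 lamstar) := by
    have hlsΛ : lamstar ∈ Icc (0:ℝ) Λ := ⟨hls.le, hls'⟩
    have hRls : 0 < R lamstar := lt_of_lt_of_le one_pos (hR1 lamstar hlsΛ)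
    set L := 2*T*(R lamstar)^3*(d lamstar (R lamstar)) with hLdef
    have hL0 : (0:ℝ) ≤ L :=
      (mul_pos (mul_pos (by linarith : (0:ℝ) < 2*T) (pow_pos hRls 3)) (hdpos _ _)).le
    have hlip : ∀ l₁ ∈ Icc (0:ℝ) lamstar, ∀ l₂ ∈ Icc (0:ℝ) lamstar, l₁ ≤ l₂ →
        R l₂ ≤ R l₁ + L * (l₂ - l₁) := by
      intro l₁ h₁ l₂ h₂ h12
      have h₁Λ : l₁ ∈ Icc (0:ℝ) Λ := ⟨h₁.1, h₁.2.trans hls'⟩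
      have h₂Λ : l₂ ∈ Icc (0:ℝ) Λ := ⟨h₂.1, h₂.2.trans hls'⟩
      apply (hR l₂ h₂Λ).2
      rintro x ⟨μ, hμ, t, ht, hor⟩
      by_cases hc : μ ≤ l₁
      · have hx : x ≤ R l₁ := (hR l₁ h₁Λ).1 ⟨μ, ⟨hμ.1, hc⟩, t, ht, hor⟩
        have : (0:ℝ) ≤ L * (l₂ - l₁) := mul_nonneg hL0 (by linarith)
        linarith
      · push_neg at hc
        have hkey := key lamstar hlsΛ l₁ μ h₁.1 hc.le (hμ.2.trans h₂.2) t ht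
        have hbl := hub l₁ h₁Λ l₁ h₁.1 le_rfl t ht
        have hμl : L * (μ - l₁) ≤ L * (l₂ - l₁) := by
          apply mul_le_mul_of_nonneg_left _ hL0
          linarith [hμ.2]
        have habs2 : ∀ p q : ℝ, |q| ≤ R l₁ → |p - q| ≤ L * (μ - l₁) → |p| ≤ R l₁ + L * (l₂ - l₁) := by
          intro p q h1 h2
          have h3 := abs_sub_abs_le_abs_sub p q
          linarith
        rcases hor with h | h | h | h <;> rw [h]
        · exact habs2 _ _ hbl.1 hkey.1
        · exact habs2 _ _ hbl.2.1 hkey.2.1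
        · exact habs2 _ _ hbl.2.2.1 hkey.2.2.1
        · exact habs2 _ _ hbl.2.2.2 hkey.2.2.2
    have hdist : ∀ l₁ ∈ Icc (0:ℝ) lamstar, ∀ l₂ ∈ Icc (0:ℝ) lamstar,
        dist (R l₁) (R l₂) ≤ Real.toNNReal L * dist l₁ l₂ := by
      intro l₁ h₁ l₂ h₂
      have hcoe : (Real.toNNReal L : ℝ) = L := Real.coe_toNNReal L hL0
      rw [Real.dist_eq, Real.dist_eq, hcoe]
      rcases le_total l₁ l₂ with h | h
      · have hm := hRmono l₁ h₁.1 l₂ ⟨h₂.1, h₂.2.trans hls'⟩ h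
        have hl := hlip l₁ h₁ l₂ h₂ h
        rw [abs_of_nonpos (by linarith), abs_of_nonpos (by linarith)]
        linarith
      · have hm := hRmono l₂ h₂.1 l₁ ⟨h₁.1, h₁.2.trans hls'⟩ h
        have hl := hlip l₂ h₂ l₁ h₁ h
        rw [abs_of_nonneg (by linarith), abs_of_nonneg (by linarith)]
        linarith
    exact (LipschitzOnWith.of_dist_le_mul hdist).continuousOn
  -- conclusion
  intro lam hlam
  by_contra hcon
  push_neg at hcon
  have hlamΛ : lam ∈ Icc (0:ℝ) Λ := ⟨hlam.1.le, hlam.2.trans hls'⟩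
  have hlamstar : lam ∈ Icc (0:ℝ) lamstar := ⟨hlam.1.le, hlam.2⟩
  obtain ⟨hQ1, hQ2, h12, hr₀R₁, hQpos, hQneg⟩ := hroots lam hlamstar
  have hR₁mem : R₁ lam ∈ Icc (R 0) (R lam) :=
    ⟨(hr₀.le.trans hr₀R₁), hcon.le⟩
  obtain ⟨μ, hμmem, hμval⟩ := intermediate_value_Icc hlam.1.le
    (hRcont.mono (Icc_subset_Icc le_rfl hlam.2)) hR₁mem
  have hμΛ : μ ∈ Icc (0:ℝ) Λ := ⟨hμmem.1, (hμmem.2.trans hlam.2).trans hls'⟩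
  have hQμ : 0 < Q μ (R₁ lam) := hμval ▸ hQR μ hμΛ
  -- monotonicity of Q in the parameter at x = R₁ lam
  have hx : (0:ℝ) < R₁ lam := lt_of_lt_of_le (lt_of_le_of_lt (by
      have := hR1 0 h0Λ; linarith) hr₀) hr₀R₁
  have hmonoQ : Q μ (R₁ lam) ≤ Q lam (R₁ lam) := by
    rw [hQ, hQ]
    have h1 : μ * d μ (R₁ lam) ≤ lam * d lam (R₁ lam) := by
      apply mul_le_mul hμmem.2 (hdmono _ _ _ _ hμmem.2 le_rfl) (hdpos μ _).le hlam.1.le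
    have h2 := mul_le_mul_of_nonneg_left h1
      (show (0:ℝ) ≤ 2*T*(R₁ lam)^3 by positivity)
    nlinarith [h2]
  rw [hQ1] at hmonoQ
  linarith
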